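/- Let W, W' be p-dimensional subspaces of ℂ^{t+1} and define |W,W'| = sup_{w ∈ W', |w|=1} |pr_{W^⊥}(w)|, where pr_{W^⊥} is the orthogonal projection onto the orthogonal complement of W. Let W ⊂ F be subspaces of ℂ^{t+1} of codimensions q ≥ r respectively. Then every subspace F' of codimension r contains a subspace W' of codimension q such that |W,W'| ≤ |F,F'|. -/

import Mathlib

open Module

/-- Grassmannian distance between subspaces: `|W,W'| = sup_{w ∈ W', ‖w‖=1} ‖pr_{W^⊥}(w)‖`. -/
noncomputable def gDist {ι : Type*} [Fintype ι] [DecidableEq ι]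
    (W W' : Submodule ℂ (EuclideanSpace ℂ ι)) : ℝ :=
  ⨆ w : {w : EuclideanSpace ℂ ι // w ∈ W' ∧ ‖w‖ = 1},
    ‖(Submodule.orthogonalProjectionOnto Wᗮ (w : EuclideanSpace ℂ ι) : EuclideanSpace ℂ ι)‖

lemma aux_exists_sub {K V : Type*} [Field K] [AddCommGroup V] [Module K V]
    [FiniteDimensional K V] (S : Submodule K V) (n : ℕ) (h : n ≤ finrank K S) :
    ∃ T : Submodule K V, T ≤ S ∧ finrank K T = n := by
  obtain ⟨f, hf⟩ := exists_linearIndependent_of_le_finrank (R := K) (M := S) h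
  have hli : LinearIndependent K (S.subtype ∘ f) := hf.map' S.subtype (Submodule.ker_subtype S)
  refine ⟨Submodule.span K (Set.range (S.subtype ∘ f)), ?_, ?_⟩
  · rw [Submodule.span_le]
    rintro x ⟨i, rfl⟩
    exact (f i).2
  · rw [finrank_span_eq_card hli, Fintype.card_fin]

theorem stmt6 (t q r : ℕ) (hqr : r ≤ q)
    (W F : Submodule ℂ (EuclideanSpace ℂ (Fin (t + 1)))) (hWF : W ≤ F)
    (hW : finrank ℂ (EuclideanSpace ℂ (Fin (t + 1))) - finrank ℂ W = q)
    (hF : finrank ℂ (EuclideanSpace ℂ (Fin (t + 1))) - finrank ℂ F = r)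
    (F' : Submodule ℂ (EuclideanSpace ℂ (Fin (t + 1))))
    (hF' : finrank ℂ (EuclideanSpace ℂ (Fin (t + 1))) - finrank ℂ F' = r) :
    ∃ W' : Submodule ℂ (EuclideanSpace ℂ (Fin (t + 1))), W' ≤ F' ∧
      finrank ℂ (EuclideanSpace ℂ (Fin (t + 1))) - finrank ℂ W' = q ∧
      gDist W W' ≤ gDist F F' := by
  classical
  have hn : finrank ℂ (EuclideanSpace ℂ (Fin (t + 1))) = t + 1 := finrank_euclideanSpace_fin
  rw [hn] at hW hF hF'
  have hWn : finrank ℂ W ≤ t + 1 := le_trans (Submodule.finrank_le W) (le_of_eq hn)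
  have hFn : finrank ℂ F ≤ t + 1 := le_trans (Submodule.finrank_le F) (le_of_eq hn)
  have hF'n : finrank ℂ F' ≤ t + 1 := le_trans (Submodule.finrank_le F') (le_of_eq hn)
  have hFperp : finrank ℂ (Fᗮ : Submodule ℂ (EuclideanSpace ℂ (Fin (t + 1)))) = r := by
    have h1 := Submodule.finrank_add_finrank_orthogonal (K := F)
    rw [hn] at h1
    omega
  have hdisj : W ⊓ Fᗮ = ⊥ := by
    rw [Submodule.eq_bot_iff]
    rintro x ⟨hx1, hx2⟩
    exact inner_self_eq_zero.mp ((Submodule.mem_orthogonal F x).mp hx2 x (hWF hx1))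
  have hXrank : finrank ℂ (W ⊔ Fᗮ : Submodule ℂ (EuclideanSpace ℂ (Fin (t + 1)))) = (t + 1 - q) + r := by
    have h1 := Submodule.finrank_sup_add_finrank_inf_eq W Fᗮ
    rw [hdisj] at h1
    simp only [finrank_bot] at h1
    omega
  have hSrank : t + 1 - q ≤ finrank ℂ (F' ⊓ (W ⊔ Fᗮ) : Submodule ℂ (EuclideanSpace ℂ (Fin (t + 1)))) := by
    have h1 := Submodule.finrank_sup_add_finrank_inf_eq F' (W ⊔ Fᗮ)
    have h2 : finrank ℂ (F' ⊔ (W ⊔ Fᗮ) : Submodule ℂ (EuclideanSpace ℂ (Fin (t + 1)))) ≤ t + 1 :=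
      le_trans (Submodule.finrank_le _) (le_of_eq hn)
    omega
  obtain ⟨W', hW'S, hW'rank⟩ := aux_exists_sub (F' ⊓ (W ⊔ Fᗮ)) (t + 1 - q) hSrank
  have hW'F' : W' ≤ F' := le_trans hW'S inf_le_left
  refine ⟨W', hW'F', by rw [hn]; omega, ?_⟩
  have hnonneg : (0:ℝ) ≤ gDist F F' := Real.iSup_nonneg fun w => norm_nonneg _
  apply Real.iSup_le _ hnonneg
  rintro ⟨w, hwW', hw1⟩
  have hwS : w ∈ F' ⊓ (W ⊔ Fᗮ) := hW'S hwW'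
  have hwF' : w ∈ F' := hwS.1
  have hwX : w ∈ (W ⊔ Fᗮ : Submodule ℂ (EuclideanSpace ℂ (Fin (t + 1)))) := hwS.2
  obtain ⟨u, hu, v, hv, huv⟩ := Submodule.mem_sup.mp hwX
  have hvW : v ∈ Wᗮ := Submodule.orthogonal_le hWF hv
  have hprojW : (Submodule.orthogonalProjectionOnto Wᗮ w : EuclideanSpace ℂ (Fin (t + 1))) = v := by
    rw [← huv, map_add]
    rw [Submodule.orthogonalProjectionOnto_apply_of_mem_orthogonal
      (Submodule.le_orthogonal_orthogonal W hu)]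
    rw [Submodule.orthogonalProjectionOnto_mem_subspace_eq_self ⟨v, hvW⟩]
    simp
  have hprojF : (Submodule.orthogonalProjectionOnto Fᗮ w : EuclideanSpace ℂ (Fin (t + 1))) = v := by
    rw [← huv, map_add]
    rw [Submodule.orthogonalProjectionOnto_apply_of_mem_orthogonal
      (Submodule.le_orthogonal_orthogonal F (hWF hu))]
    rw [Submodule.orthogonalProjectionOnto_mem_subspace_eq_self ⟨v, hv⟩]
    simp
  have hbdd : BddAbove (Set.range fun w : {w : EuclideanSpace ℂ (Fin (t + 1)) //
      w ∈ F' ∧ ‖w‖ = 1} =>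
      ‖(Submodule.orthogonalProjectionOnto Fᗮ (w : EuclideanSpace ℂ (Fin (t + 1))) :
        EuclideanSpace ℂ (Fin (t + 1)))‖) := by
    refine ⟨1, ?_⟩
    rintro x ⟨⟨y, hy, hy1⟩, rfl⟩
    calc ‖(Submodule.orthogonalProjectionOnto Fᗮ (y : EuclideanSpace ℂ (Fin (t + 1))) :
            EuclideanSpace ℂ (Fin (t + 1)))‖
        ≤ ‖Submodule.orthogonalProjectionOnto Fᗮ‖ * ‖y‖ := (Submodule.orthogonalProjectionOnto Fᗮ).le_opNorm y
      _ ≤ 1 * ‖y‖ := by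
          have := Submodule.orthogonalProjectionOnto_norm_le (K := Fᗮ)
          gcongr
      _ = 1 := by rw [one_mul, hy1]
  calc ‖(Submodule.orthogonalProjectionOnto Wᗮ w : EuclideanSpace ℂ (Fin (t + 1)))‖
      = ‖(Submodule.orthogonalProjectionOnto Fᗮ w : EuclideanSpace ℂ (Fin (t + 1)))‖ := by
        rw [hprojW, hprojF]
    _ ≤ gDist F F' := le_ciSup hbdd ⟨w, hwF', hw1⟩
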